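/- For every x > 0, A'(x)/x ≤ 5/8, where A'(x)/x = ((e^x - x)² - (1 + x²))/(4x³(1+e^x)²). -/

import Mathlib

noncomputable def Afun (x : ℝ) : ℝ := -(Real.tanh (x/2))/(4*x)

theorem stmt4 (x : ℝ) (hx : 0 < x) :
    deriv Afun x / x = ((Real.exp x - x)^2 - (1 + x^2))/(4*x^3*(1+Real.exp x)^2) ∧
    deriv Afun x / x ≤ 5/8 := by
  have hA : Afun = fun y => -((Real.exp y - 1)/(Real.exp y + 1))/(4*y) := by
    funext y
    unfold Afun
    have he : Real.exp (y/2) * Real.exp (y/2) = Real.exp y := by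
      rw [← Real.exp_add]; ring_nf
    have hp : (0:ℝ) < Real.exp (y/2) := Real.exp_pos _
    have hq : (0:ℝ) < Real.exp y + 1 := by positivity
    have h2 : Real.tanh (y/2) = (Real.exp y - 1)/(Real.exp y + 1) := by
      rw [Real.tanh_eq_sinh_div_cosh, Real.sinh_eq, Real.cosh_eq, Real.exp_neg]
      rw [div_eq_div_iff (by positivity) (by positivity)]
      field_simp
      nlinarith [he]
    rw [h2]
  set E := Real.exp x with hE
  have hEpos : 0 < E := Real.exp_pos x
  have hq : (0:ℝ) < E + 1 := by positivity
  have hd : HasDerivAt Afun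
      ((-((E * (E+1) - (E-1) * E) / (E+1)^2) * (4*x) - -((E-1)/(E+1)) * 4) / (4*x)^2) x := by
    rw [hA]
    have h1 : HasDerivAt (fun y => Real.exp y - 1) E x := (Real.hasDerivAt_exp x).sub_const 1
    have h2 : HasDerivAt (fun y => Real.exp y + 1) E x := (Real.hasDerivAt_exp x).add_const 1
    have h3 := (h1.div h2 (by positivity)).neg
    have h5 : HasDerivAt (fun y : ℝ => 4*y) 4 x := by
      simpa using (hasDerivAt_id x).const_mul (4:ℝ)
    have h6 := h3.div h5 (by positivity)
    refine h6.congr_deriv ?_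
    simp only [Pi.neg_apply, Pi.div_apply]
    rw [hE]
  have hderiv := hd.deriv
  have heq : deriv Afun x / x = ((E - x)^2 - (1 + x^2))/(4*x^3*(1+E)^2) := by
    rw [hderiv]
    rw [div_div, div_eq_div_iff (by positivity) (by positivity)]
    field_simp
    ring
  refine ⟨heq, ?_⟩
  rw [heq]
  rw [div_le_iff₀ (by positivity)]
  rcases le_or_gt x 1 with hx1 | hx1
  · have hb1 : E ≤ 1 + x + x^2/2 + (2/9)*x^3 := by
      have h := abs_le.1 (Real.exp_bound (x := x)
        (by rw [abs_of_pos hx]; exact hx1) (n := 3) (by norm_num))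
      simp [Finset.sum_range_succ, Nat.factorial] at h
      rw [abs_of_pos hx] at h
      norm_num at h
      nlinarith [h.2]
    have hb2 : 1 - x + x^2/2 - (2/9)*x^3 ≤ Real.exp (-x) := by
      have habs : |(-x)| ≤ 1 := by rw [abs_neg, abs_of_pos hx]; exact hx1
      have h := abs_le.1 (Real.exp_bound (x := -x) habs (n := 3) (by norm_num))
      simp [Finset.sum_range_succ, Nat.factorial] at h
      rw [abs_of_pos hx] at h
      norm_num at h
      nlinarith [h.1]
    have hEm : E * Real.exp (-x) = 1 := by
      rw [hE, ← Real.exp_add]; simp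
    have key : E - Real.exp (-x) ≤ 2*x + (4/9)*x^3 := by linarith
    -- E^2 - 2xE - 1 = E*(E - exp(-x) - 2x) ≤ E*(4/9)x^3
    have step : E^2 - 2*x*E - 1 ≤ E * ((4/9)*x^3) := by
      have := mul_le_mul_of_nonneg_left key hEpos.le
      nlinarith [hEm]
    have amgm : 4*E ≤ (1+E)^2 := by nlinarith [sq_nonneg (1-E)]
    nlinarith [pow_pos hx 3, mul_pos (pow_pos hx 3) hEpos]
  · have h1 : E^2 ≤ (1+E)^2 := by nlinarith
    have h3 : E^2 - 2*x*E - 1 ≤ E^2 := by nlinarith [mul_pos hx hEpos]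
    have hx3 : (1:ℝ) ≤ x^3 := by nlinarith
    have a1 : E^2 ≤ x^3*E^2 := by
      have := mul_le_mul_of_nonneg_right hx3 (sq_nonneg E)
      linarith
    have a2 : x^3*E^2 ≤ x^3*(1+E)^2 := mul_le_mul_of_nonneg_left h1 (le_of_lt (pow_pos hx 3))
    have a3 : (0:ℝ) ≤ x^3*(1+E)^2 := by positivity
    have key : (E - x)^2 - (1 + x^2) = E^2 - 2*x*E - 1 := by ring
    have key2 : (5:ℝ)/8*(4*x^3*(1+E)^2) = (5/2)*(x^3*(1+E)^2) := by ring
    rw [key, key2]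
    linarith
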